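/- arXiv:0910.5228 — 3 statements merged into one kernel-verified Lean document; each statement's English description precedes it below -/
import Mathlib

section
/- For every complex number z and real numbers a > 0 and b, the integral 4∫₀^∞ cos(2zu)·exp(2bu − a·exp(2u)) du converges and equals Γ(b+iz, a)/a^{b+iz} + Γ(b−iz, a)/a^{b−iz}, where Γ(s, a) = ∫ₐ^∞ e^{−t} t^{s−1} dt denotes the upper incomplete gamma function. -/
open MeasureTheory Complex

noncomputable def incGamma (s : ℂ) (a : ℝ) : ℂ :=
  ∫ t in Set.Ioi a, Real.exp (-t) * (t : ℂ) ^ (s - 1)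

lemma sq_le_exp {x : ℝ} (hx : 0 ≤ x) : x^2/2 ≤ Real.exp x := by
  have h1 : 1 + x/3 ≤ Real.exp (x/3) := by simpa [add_comm] using Real.add_one_le_exp (x/3)
  have h2 : (1 + x/3)^3 ≤ (Real.exp (x/3))^3 := pow_le_pow_left₀ (by positivity) h1 3
  have h3 : (Real.exp (x/3))^3 = Real.exp x := by
    rw [← Real.exp_nat_mul]; congr 1; push_cast; ring
  nlinarith [h2, h3]

lemma aux_int (s : ℂ) {a : ℝ} (ha : 0 < a) :
    IntegrableOn (fun u : ℝ => Complex.exp (2*s*u - (a * Real.exp (2*u) : ℝ))) (Set.Ioi 0) := by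
  set c : ℝ := s.re with hc
  set C : ℝ := (2*c+1)^2/(8*a) with hC
  have hmeas : AEStronglyMeasurable (fun u : ℝ => Complex.exp (2*s*u - (a * Real.exp (2*u) : ℝ)))
      (volume.restrict (Set.Ioi (0:ℝ))) := by
    apply Continuous.aestronglyMeasurable
    fun_prop
  have hg : IntegrableOn (fun u : ℝ => Real.exp C * Real.exp (-(1:ℝ)*u)) (Set.Ioi 0) :=
    (exp_neg_integrableOn_Ioi 0 one_pos).const_mul _
  refine hg.mono' hmeas ?_
  filter_upwards [ae_restrict_mem measurableSet_Ioi] with u hu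
  have hu0 : (0:ℝ) ≤ u := le_of_lt hu
  have hnorm : ‖Complex.exp (2*s*u - (a * Real.exp (2*u) : ℝ))‖
      = Real.exp (2*c*u - a * Real.exp (2*u)) := by
    rw [Complex.norm_exp]
    congr 1
    simp only [Complex.sub_re, Complex.mul_re, Complex.ofReal_re, Complex.ofReal_im,
      Complex.re_ofNat, Complex.im_ofNat, hc]
    ring
  rw [hnorm, ← Real.exp_add]
  apply Real.exp_le_exp.mpr
  have hq : 2*u^2 ≤ Real.exp (2*u) := by
    have := sq_le_exp (x := 2*u) (by linarith)
    nlinarith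
  have h2 : 2*a*u^2 ≤ a * Real.exp (2*u) := by nlinarith
  have hC8 : C * (8*a) = (2*c+1)^2 := by rw [hC]; field_simp
  nlinarith [sq_nonneg (4*a*u - (2*c+1)), ha, hC8, h2]

lemma aux_img {a : ℝ} (ha : 0 < a) :
    (fun u : ℝ => a * Real.exp (2*u)) '' Set.Ioi 0 = Set.Ioi a := by
  ext t
  constructor
  · rintro ⟨u, hu, rfl⟩
    have : (1:ℝ) < Real.exp (2*u) := by
      rw [← Real.exp_zero]; exact Real.exp_lt_exp.mpr (by linarith [Set.mem_Ioi.mp hu])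
    simpa using (mul_lt_mul_of_pos_left this ha)
  · intro ht
    have ht' : a < t := ht
    refine ⟨Real.log (t/a) / 2, ?_, ?_⟩
    · have h1 : (1:ℝ) < t/a := (one_lt_div ha).mpr ht'
      have := Real.log_pos h1
      exact Set.mem_Ioi.mpr (by linarith)
    · show a * Real.exp (2 * (Real.log (t/a) / 2)) = t
      rw [show 2 * (Real.log (t/a)/2) = Real.log (t/a) by ring,
        Real.exp_log (div_pos (lt_trans ha ht') ha)]
      field_simp

lemma aux_deriv {a : ℝ} (x : ℝ) :
    HasDerivWithinAt (fun u : ℝ => a * Real.exp (2*u)) (2 * a * Real.exp (2*x)) (Set.Ioi 0) x := by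
  have h1 : HasDerivAt (fun u : ℝ => 2*u) 2 x := by
    simpa using (hasDerivAt_id x).const_mul 2
  have h2 := (Real.hasDerivAt_exp (2*x)).comp x h1
  have h3 := h2.const_mul a
  exact h3.hasDerivWithinAt.congr_deriv (by ring)

lemma aux_inj {a : ℝ} (ha : 0 < a) :
    Set.InjOn (fun u : ℝ => a * Real.exp (2*u)) (Set.Ioi 0) := by
  intro x _ y _ h
  simp only [mul_right_inj' (ne_of_gt ha)] at h
  have := Real.exp_injective h
  linarith

lemma cpow_ofReal_exp (t : ℝ) (w : ℂ) :
    ((Real.exp t : ℝ) : ℂ) ^ w = Complex.exp (w * t) := by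
  rw [Complex.cpow_def_of_ne_zero (by exact_mod_cast Real.exp_ne_zero t),
    ← Complex.ofReal_log (Real.exp_pos t).le, Real.log_exp, mul_comm]

lemma aux_eq (s : ℂ) {a : ℝ} (ha : 0 < a) :
    2 * ∫ u in Set.Ioi (0:ℝ), Complex.exp (2*s*u - (a * Real.exp (2*u) : ℝ))
      = incGamma s a / (a:ℂ)^s := by
  have hane : (a:ℂ) ≠ 0 := Complex.ofReal_ne_zero.mpr ha.ne'
  have has : (a:ℂ)^s ≠ 0 := by
    rw [Complex.cpow_def_of_ne_zero hane]; exact Complex.exp_ne_zero _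
  have key := MeasureTheory.integral_image_eq_integral_abs_deriv_smul
    (f' := fun x => 2*a*Real.exp (2*x))
    measurableSet_Ioi (fun x _ => aux_deriv x) (aux_inj ha)
    (fun t : ℝ => (Real.exp (-t) : ℂ) * (t:ℂ) ^ (s-1))
  rw [aux_img ha] at key
  have hrw : Set.EqOn
      (fun x : ℝ => |2*a*Real.exp (2*x)| • ((Real.exp (-(a * Real.exp (2*x))) : ℂ) * ((a * Real.exp (2*x) : ℝ):ℂ) ^ (s-1)))
      (fun x : ℝ => 2 * (a:ℂ)^s * Complex.exp (2*s*x - (a * Real.exp (2*x) : ℝ)))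
      (Set.Ioi 0) := by
    intro x _
    have hpos : (0:ℝ) < 2*a*Real.exp (2*x) := by positivity
    simp only
    rw [abs_of_pos hpos, real_smul,
      show ((a * Real.exp (2*x) : ℝ) : ℂ) = (a:ℂ) * ((Real.exp (2*x) : ℝ):ℂ) by push_cast; ring,
      Complex.mul_cpow_ofReal_nonneg ha.le (Real.exp_pos _).le, cpow_ofReal_exp]
    have hpow : (a:ℂ)^s = (a:ℂ)^(s-1) * (a:ℂ) := by
      rw [Complex.cpow_sub _ _ hane, Complex.cpow_one]
      field_simp
    conv_rhs => rw [hpow]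
    have hsplit : Complex.exp (2*s*x - (a:ℂ) * ((Real.exp (2*x):ℝ):ℂ))
        = Complex.exp ((s-1)*(2*x:ℝ)) * Complex.exp ((2*x:ℝ):ℂ)
          * Complex.exp (-((a:ℂ) * ((Real.exp (2*x):ℝ):ℂ))) := by
      rw [← Complex.exp_add, ← Complex.exp_add]
      congr 1
      push_cast
      ring
    rw [hsplit]
    push_cast
    ring
  rw [MeasureTheory.setIntegral_congr_fun measurableSet_Ioi hrw] at key
  rw [MeasureTheory.integral_const_mul] at key
  rw [eq_div_iff has, incGamma, key]
  ring

theorem stmt_0 (z : ℂ) (a b : ℝ) (ha : 0 < a) :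
    IntegrableOn
      (fun u : ℝ => Complex.cos (2 * z * u) * Real.exp (2 * b * u - a * Real.exp (2 * u)))
      (Set.Ioi 0) ∧
    4 * ∫ u in Set.Ioi (0 : ℝ),
        Complex.cos (2 * z * u) * Real.exp (2 * b * u - a * Real.exp (2 * u)) =
      incGamma ((b : ℂ) + Complex.I * z) a / (a : ℂ) ^ ((b : ℂ) + Complex.I * z) +
      incGamma ((b : ℂ) - Complex.I * z) a / (a : ℂ) ^ ((b : ℂ) - Complex.I * z) := by
  have hpt : (fun u : ℝ => Complex.cos (2 * z * u) * (Real.exp (2 * b * u - a * Real.exp (2 * u)) : ℂ))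
      = fun u : ℝ => (Complex.exp (2*((b:ℂ) + Complex.I*z)*u - (a * Real.exp (2*u) : ℝ))
          + Complex.exp (2*((b:ℂ) - Complex.I*z)*u - (a * Real.exp (2*u) : ℝ)))/2 := by
    funext u
    rw [Complex.cos, Complex.ofReal_exp, div_mul_eq_mul_div, add_mul,
      ← Complex.exp_add, ← Complex.exp_add]
    congr 2 <;> push_cast <;> ring
  have h1 := aux_int ((b:ℂ) + Complex.I*z) ha
  have h2 := aux_int ((b:ℂ) - Complex.I*z) ha
  have hint : IntegrableOn
      (fun u : ℝ => Complex.cos (2 * z * u) * Real.exp (2 * b * u - a * Real.exp (2 * u)))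
      (Set.Ioi 0) := by
    rw [hpt]
    exact (h1.add h2).div_const 2
  refine ⟨hint, ?_⟩
  rw [hpt, MeasureTheory.integral_div, MeasureTheory.integral_add h1 h2,
    ← aux_eq ((b:ℂ) + Complex.I*z) ha, ← aux_eq ((b:ℂ) - Complex.I*z) ha]
  ring
end

section
/- Define c(n) = (4n⁴π²(n²π − 9/4) − 6n²π(n²π − 5/4)) / exp(n²π) for positive integers n. Then c(1) < 0 and c(n) > 0 for all n ≥ 2. -/
open Real

/-- The coefficient of `1/x²` in the asymptotic expansion of `Φₙ(x)`. -/
noncomputable def phiCoeff (n : ℕ) : ℝ :=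
  (4 * n ^ 4 * π ^ 2 * (n ^ 2 * π - 9 / 4) - 6 * n ^ 2 * π * (n ^ 2 * π - 5 / 4)) /
    Real.exp (n ^ 2 * π)

theorem stmt_6 : phiCoeff 1 < 0 ∧ ∀ n : ℕ, 2 ≤ n → 0 < phiCoeff n := by
  have hpi3 := Real.pi_gt_three
  have hpi315 := Real.pi_lt_d2
  constructor
  · unfold phiCoeff
    apply div_neg_of_neg_of_pos _ (Real.exp_pos _)
    push_cast
    nlinarith [mul_pos (sub_pos.2 hpi3) (sub_pos.2 hpi315), sq_nonneg (π - 3)]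
  · intro n hn
    unfold phiCoeff
    apply div_pos _ (Real.exp_pos _)
    have hn2 : (4 : ℝ) ≤ (n : ℝ) ^ 2 := by
      have : (2 : ℝ) ≤ (n : ℝ) := by exact_mod_cast hn
      nlinarith
    have ht : (12 : ℝ) ≤ (n : ℝ) ^ 2 * π := by nlinarith
    nlinarith [sq_nonneg ((n : ℝ) ^ 2 * π), sq_nonneg ((n : ℝ) ^ 2 * π - 12)]
end

section
/- Let φₙ(t) = exp(−n²π·exp(2t))·(8π²n⁴·exp(4.5t) − 12πn²·exp(2.5t)) for n ≥ 1 and t ≥ 0. Then for every z ∈ ℂ and every N ≥ 1, the integral ∫₀^∞ cos(zt)·φₙ(t) dt converges absolutely and equals 2π²n⁴·G(z/2; n²π, 9/4) − 3πn²·G(z/2; n²π, 5/4), where G(z; a, b) = Γ(b+iz, a)/a^{b+iz} + Γ(b−iz, a)/a^{b−iz}. -/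
open MeasureTheory Complex Real

/-- The hyperbolic gamma function `G(z; a, b)`. -/
noncomputable def hypGamma (z : ℂ) (a b : ℝ) : ℂ :=
  incGamma ((b : ℂ) + Complex.I * z) a / (a : ℂ) ^ ((b : ℂ) + Complex.I * z) +
  incGamma ((b : ℂ) - Complex.I * z) a / (a : ℂ) ^ ((b : ℂ) - Complex.I * z)

/-- The `n`-th term of Riemann's kernel. -/
noncomputable def phiTerm (n : ℕ) (t : ℝ) : ℝ :=
  Real.exp (-(n ^ 2) * π * Real.exp (2 * t)) *
    (8 * π ^ 2 * n ^ 4 * Real.exp (4.5 * t) - 12 * π * n ^ 2 * Real.exp (2.5 * t))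

lemma aux_integrandInt {a : ℝ} (ha : 0 < a) (w : ℂ) :
    IntegrableOn (fun u : ℝ => (Real.exp (-u) : ℂ) * (u : ℂ) ^ (w - 1)) (Set.Ioi a) := by
  have hcont : ContinuousOn (fun u : ℝ => (Real.exp (-u) : ℂ) * (u : ℂ) ^ (w - 1)) (Set.Ici a) := by
    apply ContinuousOn.mul
    · exact (Complex.continuous_ofReal.comp (Real.continuous_exp.comp continuous_neg)).continuousOn
    · intro x hx
      have hx' : (0:ℝ) < x := lt_of_lt_of_le ha hx
      exact (continuousAt_ofReal_cpow_const x _ (Or.inr hx'.ne')).continuousWithinAt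
  have hBigO : (fun u : ℝ => (Real.exp (-u) : ℂ) * (u : ℂ) ^ (w - 1)) =O[Filter.atTop]
      fun x : ℝ => Real.exp (-(1/2) * x) := by
    refine Asymptotics.IsBigO.of_norm_left ?_
    refine ((Real.Gamma_integrand_isLittleO (w.re - 1)).isBigO).congr' ?_ Filter.EventuallyEq.rfl
    filter_upwards [Filter.eventually_gt_atTop 0] with x hx
    rw [norm_mul, Complex.norm_real, Real.norm_eq_abs,
      Complex.norm_cpow_eq_rpow_re_of_pos hx, abs_of_pos (Real.exp_pos _), Complex.sub_re,
      Complex.one_re]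
  have := (hcont.locallyIntegrableOn measurableSet_Ici).integrableOn_of_isBigO_atTop hBigO
    ⟨Set.Ioi (0:ℝ), Filter.Ioi_mem_atTop 0, exp_neg_integrableOn_Ioi 0 one_half_pos⟩
  exact this.mono_set Set.Ioi_subset_Ici_self

lemma aux_key {a : ℝ} (ha : 0 < a) (w : ℂ) :
    IntegrableOn (fun t : ℝ => Complex.exp (2 * w * t) *
      (Real.exp (-(a * Real.exp (2 * t))) : ℂ)) (Set.Ioi 0) ∧
    (∫ t in Set.Ioi (0:ℝ), Complex.exp (2 * w * t) * (Real.exp (-(a * Real.exp (2 * t))) : ℂ))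
      = incGamma w a / (2 * (a:ℂ) ^ w) := by
  set f : ℝ → ℝ := fun t => a * Real.exp (2 * t) with hf
  have hderiv : ∀ t ∈ Set.Ioi (0:ℝ), HasDerivWithinAt f (a * (Real.exp (2*t) * 2)) (Set.Ioi 0) t := by
    intro t _
    exact (((Real.hasDerivAt_exp (2*t)).comp t (by simpa using (hasDerivAt_id t).const_mul 2)).const_mul a).hasDerivWithinAt
  have hinj : Set.InjOn f (Set.Ioi 0) := by
    intro x _ y _ hxy
    have := mul_left_cancel₀ ha.ne' hxy
    have := Real.exp_injective this
    linarith
  have himg : f '' Set.Ioi 0 = Set.Ioi a := by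
    ext u
    constructor
    · rintro ⟨t, ht, rfl⟩
      have : (1:ℝ) < Real.exp (2*t) := by
        rw [show (1:ℝ) = Real.exp 0 by simp]
        exact Real.exp_lt_exp.2 (by simp at ht ⊢; linarith)
      simp only [Set.mem_Ioi, hf]
      nlinarith
    · intro hu
      simp only [Set.mem_Ioi] at hu
      refine ⟨Real.log (u/a) / 2, ?_, ?_⟩
      · have : (1:ℝ) < u / a := (one_lt_div ha).2 hu
        have hl : 0 < Real.log (u/a) := Real.log_pos ((one_lt_div ha).2 hu)
        simp only [Set.mem_Ioi]
        positivity
      · simp only [hf]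
        rw [mul_div_cancel₀ _ (two_ne_zero), Real.exp_log (div_pos (ha.trans hu) ha)]
        field_simp
  have hane : (a:ℂ) ≠ 0 := Complex.ofReal_ne_zero.2 ha.ne'
  have hcne : ((a:ℂ)) ^ w ≠ 0 := by
    simp [Complex.cpow_eq_zero_iff, hane]
  set g : ℝ → ℂ := fun u => (Real.exp (-u) : ℂ) * (u : ℂ) ^ (w - 1) with hg
  have hpt : ∀ t : ℝ, |a * (Real.exp (2*t) * 2)| • g (f t)
      = (2 * (a:ℂ) ^ w) * (Complex.exp (2 * w * t) * (Real.exp (-(a * Real.exp (2 * t))) : ℂ)) := by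
    intro t
    have he : (0:ℝ) < Real.exp (2*t) := Real.exp_pos _
    have habs : |a * (Real.exp (2*t) * 2)| = a * (Real.exp (2*t) * 2) := abs_of_pos (by positivity)
    have hcp : ((a * Real.exp (2*t) : ℝ) : ℂ) ^ (w - 1)
        = (a:ℂ) ^ (w-1) * Complex.exp ((w-1) * (2*(t:ℂ))) := by
      rw [Complex.ofReal_mul, Complex.mul_cpow_ofReal_nonneg ha.le he.le]
      congr 1
      rw [Complex.ofReal_exp, Complex.cpow_def_of_ne_zero (Complex.exp_ne_zero _),
        Complex.log_exp (by simpa using Real.pi_pos) (by simpa using Real.pi_pos.le)]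
      congr 1
      push_cast
      ring
    have hA : ((Real.exp (2*t) : ℝ) : ℂ) = Complex.exp (2*(t:ℂ)) := by
      rw [Complex.ofReal_exp]; norm_cast
    have hW : (a:ℂ)^w = (a:ℂ)^(w-1) * a := by
      conv_lhs => rw [← sub_add_cancel w 1, Complex.cpow_add _ _ hane, Complex.cpow_one]
    have hE : Complex.exp (2*w*(t:ℂ)) = Complex.exp ((w-1)*(2*(t:ℂ))) * Complex.exp (2*(t:ℂ)) := by
      rw [← Complex.exp_add]; congr 1; ring
    simp only [hf, hg]
    rw [habs, Complex.real_smul, hcp, hW, hE, Complex.ofReal_mul, Complex.ofReal_mul, hA]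
    push_cast
    ring
  have hint := aux_integrandInt ha w
  rw [← himg, integrableOn_image_iff_integrableOn_abs_deriv_smul measurableSet_Ioi hderiv hinj]
    at hint
  have heq := integral_image_eq_integral_abs_deriv_smul measurableSet_Ioi hderiv hinj g
  rw [himg] at heq
  have hc2 : (2 * (a:ℂ) ^ w) ≠ 0 := by simp [hcne]
  constructor
  · refine IntegrableOn.congr_fun (hint.const_mul (2 * (a:ℂ) ^ w)⁻¹) ?_ measurableSet_Ioi
    intro t _
    have h := hpt t
    simp only [hf, hg] at h ⊢
    rw [h, inv_mul_cancel_left₀ hc2]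
  · have h2 : incGamma w a = (2 * (a:ℂ) ^ w) *
        ∫ t in Set.Ioi (0:ℝ), Complex.exp (2 * w * t) * (Real.exp (-(a * Real.exp (2 * t))) : ℂ) := by
      rw [incGamma, heq]
      simp only [hpt]
      rw [integral_const_mul]
    rw [h2, mul_div_cancel_left₀ _ hc2]

theorem stmt_13 (n : ℕ) (hn : 1 ≤ n) (z : ℂ) :
    IntegrableOn (fun t : ℝ => Complex.cos (z * t) * (phiTerm n t : ℂ)) (Set.Ioi 0) ∧
    (∫ t in Set.Ioi (0 : ℝ), Complex.cos (z * t) * (phiTerm n t : ℂ)) =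
      2 * (π : ℂ) ^ 2 * (n : ℂ) ^ 4 * hypGamma (z / 2) ((n : ℝ) ^ 2 * π) (9 / 4) -
      3 * (π : ℂ) * (n : ℂ) ^ 2 * hypGamma (z / 2) ((n : ℝ) ^ 2 * π) (5 / 4) := by
  have hπ := Real.pi_pos
  have hn' : (0:ℝ) < (n:ℝ) := by exact_mod_cast hn
  have ha : (0:ℝ) < (n:ℝ) ^ 2 * π := by positivity
  obtain ⟨hI1, hE1⟩ := aux_key ha (((9/4:ℝ):ℂ) + Complex.I * (z/2))
  obtain ⟨hI2, hE2⟩ := aux_key ha (((9/4:ℝ):ℂ) - Complex.I * (z/2))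
  obtain ⟨hI3, hE3⟩ := aux_key ha (((5/4:ℝ):ℂ) + Complex.I * (z/2))
  obtain ⟨hI4, hE4⟩ := aux_key ha (((5/4:ℝ):ℂ) - Complex.I * (z/2))
  have hfun : ∀ t : ℝ, Complex.cos (z * t) * (phiTerm n t : ℂ) =
      4*(π:ℂ)^2*(n:ℂ)^4 *
        ((Complex.exp (2 * (((9/4:ℝ):ℂ) + Complex.I * (z/2)) * t) *
          (Real.exp (-((n:ℝ) ^ 2 * π * Real.exp (2 * t))) : ℂ)) +
         (Complex.exp (2 * (((9/4:ℝ):ℂ) - Complex.I * (z/2)) * t) *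
          (Real.exp (-((n:ℝ) ^ 2 * π * Real.exp (2 * t))) : ℂ))) -
      6*(π:ℂ)*(n:ℂ)^2 *
        ((Complex.exp (2 * (((5/4:ℝ):ℂ) + Complex.I * (z/2)) * t) *
          (Real.exp (-((n:ℝ) ^ 2 * π * Real.exp (2 * t))) : ℂ)) +
         (Complex.exp (2 * (((5/4:ℝ):ℂ) - Complex.I * (z/2)) * t) *
          (Real.exp (-((n:ℝ) ^ 2 * π * Real.exp (2 * t))) : ℂ))) := by
    intro t
    have E1 : Complex.exp (2 * (((9/4:ℝ):ℂ) + Complex.I * (z/2)) * t)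
        = Complex.exp ((4.5:ℝ) * (t:ℂ)) * Complex.exp (z * t * Complex.I) := by
      rw [← Complex.exp_add]; congr 1; push_cast; norm_num; ring
    have E2 : Complex.exp (2 * (((9/4:ℝ):ℂ) - Complex.I * (z/2)) * t)
        = Complex.exp ((4.5:ℝ) * (t:ℂ)) * Complex.exp (-(z * t) * Complex.I) := by
      rw [← Complex.exp_add]; congr 1; push_cast; norm_num; ring
    have E3 : Complex.exp (2 * (((5/4:ℝ):ℂ) + Complex.I * (z/2)) * t)
        = Complex.exp ((2.5:ℝ) * (t:ℂ)) * Complex.exp (z * t * Complex.I) := by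
      rw [← Complex.exp_add]; congr 1; push_cast; norm_num; ring
    have E4 : Complex.exp (2 * (((5/4:ℝ):ℂ) - Complex.I * (z/2)) * t)
        = Complex.exp ((2.5:ℝ) * (t:ℂ)) * Complex.exp (-(z * t) * Complex.I) := by
      rw [← Complex.exp_add]; congr 1; push_cast; norm_num; ring
    rw [E1, E2, E3, E4, Complex.cos]
    simp only [phiTerm]
    push_cast
    ring_nf
  refine ⟨?_, ?_⟩
  · refine IntegrableOn.congr_fun
      (((hI1.add hI2).const_mul (4*(π:ℂ)^2*(n:ℂ)^4)).sub
        ((hI3.add hI4).const_mul (6*(π:ℂ)*(n:ℂ)^2))) ?_ measurableSet_Ioi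
    intro t _
    exact (hfun t).symm
  · rw [show (fun t : ℝ => Complex.cos (z * t) * (phiTerm n t : ℂ)) = fun t : ℝ =>
      4*(π:ℂ)^2*(n:ℂ)^4 *
        ((Complex.exp (2 * (((9/4:ℝ):ℂ) + Complex.I * (z/2)) * t) *
          (Real.exp (-((n:ℝ) ^ 2 * π * Real.exp (2 * t))) : ℂ)) +
         (Complex.exp (2 * (((9/4:ℝ):ℂ) - Complex.I * (z/2)) * t) *
          (Real.exp (-((n:ℝ) ^ 2 * π * Real.exp (2 * t))) : ℂ))) -
      6*(π:ℂ)*(n:ℂ)^2 *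
        ((Complex.exp (2 * (((5/4:ℝ):ℂ) + Complex.I * (z/2)) * t) *
          (Real.exp (-((n:ℝ) ^ 2 * π * Real.exp (2 * t))) : ℂ)) +
         (Complex.exp (2 * (((5/4:ℝ):ℂ) - Complex.I * (z/2)) * t) *
          (Real.exp (-((n:ℝ) ^ 2 * π * Real.exp (2 * t))) : ℂ))) from funext hfun]
    have hI12 : IntegrableOn (fun t : ℝ =>
        4*(π:ℂ)^2*(n:ℂ)^4 *
        ((Complex.exp (2 * (((9/4:ℝ):ℂ) + Complex.I * (z/2)) * t) *
          (Real.exp (-((n:ℝ) ^ 2 * π * Real.exp (2 * t))) : ℂ)) +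
         (Complex.exp (2 * (((9/4:ℝ):ℂ) - Complex.I * (z/2)) * t) *
          (Real.exp (-((n:ℝ) ^ 2 * π * Real.exp (2 * t))) : ℂ)))) (Set.Ioi 0) :=
      (hI1.add hI2).const_mul _
    have hI34 : IntegrableOn (fun t : ℝ =>
        6*(π:ℂ)*(n:ℂ)^2 *
        ((Complex.exp (2 * (((5/4:ℝ):ℂ) + Complex.I * (z/2)) * t) *
          (Real.exp (-((n:ℝ) ^ 2 * π * Real.exp (2 * t))) : ℂ)) +
         (Complex.exp (2 * (((5/4:ℝ):ℂ) - Complex.I * (z/2)) * t) *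
          (Real.exp (-((n:ℝ) ^ 2 * π * Real.exp (2 * t))) : ℂ)))) (Set.Ioi 0) :=
      (hI3.add hI4).const_mul _
    rw [integral_sub hI12 hI34,
      integral_const_mul, integral_const_mul, integral_add hI1 hI2, integral_add hI3 hI4,
      hE1, hE2, hE3, hE4]
    simp only [hypGamma]
    ring
end
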